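/- Under the hypotheses T + RA = I, range(R) ⊆ range(Aᵀ), and ‖T P_{range(Aᵀ)}‖ < 1, the affine operator Q(x) := Tx + Rb satisfies: ‖Q(x) − Q(y)‖ ≤ ‖x − y‖ for all x, y ∈ ℝⁿ, and if ‖Q(x) − Q(y)‖ = ‖x − y‖ then Q(x) − Q(y) = x − y and ⟨x − y, Q(y) − y⟩ = 0. -/

import Mathlib

set_option maxHeartbeats 1000000

open Matrix

/-- The continuous linear map on Euclidean spaces induced by a matrix. -/
noncomputable def mulE {m n : ℕ} (A : Matrix (Fin m) (Fin n) ℝ) :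
    EuclideanSpace ℝ (Fin n) →L[ℝ] EuclideanSpace ℝ (Fin m) :=
  LinearMap.toContinuousLinearMap (Matrix.toEuclideanLin A)

/-- The orthogonal projection of the ambient space onto a subspace, as a map of the
ambient space. -/
noncomputable def projCLM {n : ℕ} (V : Submodule ℝ (EuclideanSpace ℝ (Fin n))) :
    EuclideanSpace ℝ (Fin n) →L[ℝ] EuclideanSpace ℝ (Fin n) :=
  V.subtypeL.comp (V.orthogonalProjection)

lemma mulE_mul {m n k : ℕ} (M : Matrix (Fin m) (Fin n) ℝ) (N : Matrix (Fin n) (Fin k) ℝ)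
    (x : EuclideanSpace ℝ (Fin k)) : mulE (M * N) x = mulE M (mulE N x) := by
  simp [mulE, Matrix.toEuclideanLin_apply, Matrix.mulVec_mulVec]

lemma ker_of_orth {m n : ℕ} (A : Matrix (Fin m) (Fin n) ℝ)
    (v : EuclideanSpace ℝ (Fin n))
    (hv : v ∈ (LinearMap.range (Matrix.toEuclideanLin Aᵀ))ᗮ) :
    mulE A v = 0 := by
  have hadj : Matrix.toEuclideanLin Aᵀ = LinearMap.adjoint (Matrix.toEuclideanLin A) := by
    rw [← Matrix.toEuclideanLin_conjTranspose_eq_adjoint,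
      Matrix.conjTranspose_eq_transpose_of_trivial]
  have : ∀ w, inner ℝ (mulE A v) w = (0 : ℝ) := by
    intro w
    have := hv (Matrix.toEuclideanLin Aᵀ w) ⟨w, rfl⟩
    rw [hadj, LinearMap.adjoint_inner_left] at this
    rw [← inner_conj_symm]
    simpa [mulE] using this
  exact inner_self_eq_zero.mp (this _)

/-- Under `T + RA = I`, `range R ⊆ range Aᵀ`, `‖T P_{range Aᵀ}‖ < 1`, the affine
operator `Q(x) = Tx + Rb` is nonexpansive, and in the equality case
`‖Q(x) − Q(y)‖ = ‖x − y‖` one has `Q(x) − Q(y) = x − y` and `⟨x − y, Q(y) − y⟩ = 0`. -/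
theorem Q_in_F1 (m n : ℕ)
    (A : Matrix (Fin m) (Fin n) ℝ) (b : EuclideanSpace ℝ (Fin m))
    (T : Matrix (Fin n) (Fin n) ℝ)
    (R : Matrix (Fin n) (Fin m) ℝ)
    (h1 : T + R * A = 1)
    (h2 : ∀ y : EuclideanSpace ℝ (Fin m),
      mulE R y ∈ LinearMap.range (Matrix.toEuclideanLin Aᵀ))
    (h3 : ‖(mulE T).comp (projCLM (LinearMap.range (Matrix.toEuclideanLin Aᵀ)))‖ < 1)
    (Q : EuclideanSpace ℝ (Fin n) → EuclideanSpace ℝ (Fin n))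
    (hQ : ∀ x, Q x = mulE T x + mulE R b) :
    (∀ x y, ‖Q x - Q y‖ ≤ ‖x - y‖) ∧
    (∀ x y, ‖Q x - Q y‖ = ‖x - y‖ →
      Q x - Q y = x - y ∧ inner ℝ (x - y) (Q y - y) = (0 : ℝ)) := by
  set V := LinearMap.range (Matrix.toEuclideanLin Aᵀ) with hV
  set c := ‖(mulE T).comp (projCLM V)‖ with hc
  have hc0 : 0 ≤ c := norm_nonneg _
  -- Q x - Q y = T (x - y)
  have hQsub : ∀ x y, Q x - Q y = mulE T (x - y) := by
    intro x y; rw [hQ, hQ, map_sub]; abel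
  -- T fixes vectors orthogonal to V
  have hTfix : ∀ v, v ∈ Vᗮ → mulE T v = v := by
    intro v hv
    have h1' : mulE T v + mulE (R * A) v = mulE (T + R * A) v := by
      simp [mulE, map_add]
    rw [h1] at h1'
    have hAv : mulE A v = 0 := ker_of_orth A v hv
    rw [mulE_mul, hAv, map_zero, add_zero] at h1'
    simpa [mulE, Matrix.toEuclideanLin_apply] using h1'
  -- norm bound on V
  have hTV : ∀ u, u ∈ V → ‖mulE T u‖ ≤ c * ‖u‖ := by
    intro u hu
    have hproj : projCLM V u = u := by
      exact V.starProjection_eq_self_iff.mpr hu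
    calc ‖mulE T u‖ = ‖((mulE T).comp (projCLM V)) u‖ := by
          simp [ContinuousLinearMap.comp_apply, hproj]
      _ ≤ c * ‖u‖ := ContinuousLinearMap.le_opNorm _ _
  -- T maps V into V
  have hTmem : ∀ u, u ∈ V → mulE T u ∈ V := by
    intro u hu
    have h1' : mulE T u = u - mulE R (mulE A u) := by
      have : mulE T u + mulE (R * A) u = mulE (T + R * A) u := by
        simp [mulE, map_add]
      rw [h1] at this
      rw [mulE_mul] at this
      have h1n : mulE (1 : Matrix (Fin n) (Fin n) ℝ) u = u := by
        simp [mulE, Matrix.toEuclideanLin_apply]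
      rw [h1n] at this
      linear_combination (norm := module) this
    rw [h1']
    exact Submodule.sub_mem V hu (h2 _)
  -- core decomposition estimate
  have key : ∀ z : EuclideanSpace ℝ (Fin n),
      ‖mulE T z‖ ≤ ‖z‖ ∧ (‖mulE T z‖ = ‖z‖ → mulE T z = z ∧ z ∈ Vᗮ) := by
    intro z
    set u : EuclideanSpace ℝ (Fin n) := (V.orthogonalProjection z : EuclideanSpace ℝ (Fin n))
      with hu
    set v : EuclideanSpace ℝ (Fin n) := z - u with hvdef
    have huV : u ∈ V := (V.orthogonalProjection z).2
    have hvV : v ∈ Vᗮ := V.sub_starProjection_mem_orthogonal z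
    have hz : z = u + v := by rw [hvdef]; abel
    have hTz : mulE T z = mulE T u + v := by
      rw [hz, map_add, hTfix v hvV]
    have hinner1 : inner ℝ (mulE T u) v = (0 : ℝ) := hvV _ (hTmem u huV)
    have hinner2 : inner ℝ u v = (0 : ℝ) := hvV _ huV
    have hnz : ‖z‖ ^ 2 = ‖u‖ ^ 2 + ‖v‖ ^ 2 := by
      rw [hz, norm_add_sq_real, hinner2]; ring
    have hnTz : ‖mulE T z‖ ^ 2 = ‖mulE T u‖ ^ 2 + ‖v‖ ^ 2 := by
      rw [hTz, norm_add_sq_real, hinner1]; ring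
    have hTu : ‖mulE T u‖ ≤ c * ‖u‖ := hTV u huV
    have hTu2 : ‖mulE T u‖ ^ 2 ≤ ‖u‖ ^ 2 := by
      have h1 : ‖mulE T u‖ ≤ ‖u‖ := le_trans hTu (by nlinarith [norm_nonneg u])
      nlinarith [norm_nonneg (mulE T u)]
    have hle : ‖mulE T z‖ ≤ ‖z‖ := by
      have : ‖mulE T z‖ ^ 2 ≤ ‖z‖ ^ 2 := by rw [hnz, hnTz]; linarith
      nlinarith [norm_nonneg (mulE T z), norm_nonneg z]
    refine ⟨hle, fun heq => ?_⟩
    have hsq : ‖mulE T z‖ ^ 2 = ‖z‖ ^ 2 := by rw [heq]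
    have hequ : ‖mulE T u‖ ^ 2 = ‖u‖ ^ 2 := by
      rw [hnz, hnTz] at hsq; linarith
    have hu2 : ‖u‖ ^ 2 ≤ c ^ 2 * ‖u‖ ^ 2 := by
      nlinarith [hTV u huV, norm_nonneg (mulE T u), norm_nonneg u]
    have h1c : 0 < 1 - c ^ 2 := by nlinarith
    have hsq0 : ‖u‖ ^ 2 ≤ 0 := by nlinarith
    have hun : ‖u‖ = 0 := by nlinarith [norm_nonneg u]
    have hu0 : u = 0 := norm_eq_zero.mp hun
    have hzv : z ∈ Vᗮ := by
      have : z = v := by rw [hz, hu0, zero_add]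
      rw [this]; exact hvV
    refine ⟨?_, hzv⟩
    rw [hz, hu0, map_add, map_zero, zero_add, hTfix v hvV, zero_add]
  constructor
  · intro x y
    rw [hQsub]
    exact (key (x - y)).1
  · intro x y heq
    rw [hQsub] at heq ⊢
    obtain ⟨hfix, horth⟩ := (key (x - y)).2 heq
    refine ⟨hfix, ?_⟩
    -- Q y - y ∈ V
    have hQy : Q y - y = mulE R b - mulE R (mulE A y) := by
      rw [hQ]
      have : mulE T y + mulE (R * A) y = mulE (T + R * A) y := by
        simp [mulE, map_add]
      rw [h1] at this
      rw [mulE_mul] at this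
      have h1n : mulE (1 : Matrix (Fin n) (Fin n) ℝ) y = y := by
        simp [mulE, Matrix.toEuclideanLin_apply]
      rw [h1n] at this
      linear_combination (norm := module) this
    have hmem : Q y - y ∈ V := by
      rw [hQy]; exact Submodule.sub_mem V (h2 _) (h2 _)
    rw [real_inner_comm]
    exact Submodule.inner_right_of_mem_orthogonal hmem horth
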